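/- Quadrilateral case, nonnegative truncated areas: (i) for all ρ ∈ [0.1, 0.85] and t ∈ [0, 0.168], I(circPerim0(ρπ/3), 4, t, ρ) > 0, i.e., √(4π·(ρπ/3) − (ρπ/3)²) − t·B' + p₅' − ρ·p₅ > 0; and (ii) for all ρ ∈ [0.85, 1] and t ∈ [0, 0.168], I(regPerim(ρπ/3 − t, 4), 4, t, ρ) > 0, i.e., regPerim(ρπ/3 − t, 4) − t·B' + p₅' − ρ·p₅ > 0. -/

import Mathlib

open Real

/-- Perimeter of a regular spherical `n`-gon of area `x` on the unit sphere. -/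
noncomputable def regPerim (x n : ℝ) : ℝ :=
  n * Real.arccos ((Real.cos (2 * π / n) +
      (Real.cos ((π - (2 * π - x) / n) / 2)) ^ 2) /
      (Real.sin ((π - (2 * π - x) / n) / 2)) ^ 2)

/-- Circumference of a circle on the unit sphere enclosing area `a`. -/
noncomputable def circPerim0 (a : ℝ) : ℝ := Real.sqrt (4 * π * a - a ^ 2)

/-- Perimeter of the regular spherical pentagon of area `π/3`. -/
noncomputable def p5 : ℝ := 5 * Real.arccos ((4 * Real.cos (2 * π / 5) + 1) / 3)

/-- Derivative at `n = 5` of `n ↦ regPerim (π/3) n`. -/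
noncomputable def p5' : ℝ := deriv (fun n : ℝ => regPerim (π / 3) n) 5

/-- `B' = -∂₁ regPerim (π/3, 5)`. -/
noncomputable def B' : ℝ := - deriv (fun x : ℝ => regPerim x 5) (π / 3)

/-- The isoperimetric functional `I(ℓ, n, t, ρ)`. -/
noncomputable def Ifun (ℓ n t ρ : ℝ) : ℝ := ℓ - t * B' + (5 - n) * p5' - ρ * p5


private lemma mono_aux {f f' : ℝ → ℝ} (hd : ∀ y, HasDerivAt f (f' y) y)
    (h0 : ∀ y, 0 ≤ y → 0 ≤ f' y) {x : ℝ} (hx : 0 ≤ x) : f 0 ≤ f x := by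
  have hmono : MonotoneOn f (Set.Ici 0) := by
    apply monotoneOn_of_deriv_nonneg (convex_Ici 0)
    · exact fun y _ => (hd y).differentiableAt.continuousAt.continuousWithinAt
    · exact fun y _ => (hd y).differentiableAt.differentiableWithinAt
    · intro y hy
      rw [(hd y).deriv]
      exact h0 y (le_of_lt (by simpa using hy))
  exact hmono Set.self_mem_Ici hx hx

private lemma sin_ge_cubic {x : ℝ} (hx : 0 ≤ x) : x - x^3/6 ≤ sin x := by
  have := mono_aux (f := fun x : ℝ => sin x - (x - x^3/6))
    (f' := fun y : ℝ => cos y - (1 - y^2/2)) (fun y => by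
      have : HasDerivAt (fun x : ℝ => sin x - (x - x^3/6)) (cos y - (1 - 3*y^(3-1)/6)) y :=
        (Real.hasDerivAt_sin y).sub (((hasDerivAt_id y).sub ((hasDerivAt_pow 3 y).div_const 6)))
      convert this using 1; norm_num; ring)
    (fun y _ => by nlinarith [Real.one_sub_sq_div_two_le_cos (x := y)]) hx
  simp at this; linarith

private lemma cos_le_quart {x : ℝ} (hx : 0 ≤ x) : cos x ≤ 1 - x^2/2 + x^4/24 := by
  have := mono_aux (f := fun x : ℝ => 1 - x^2/2 + x^4/24 - cos x)
    (f' := fun y : ℝ => sin y - (y - y^3/6)) (fun y => by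
      have : HasDerivAt (fun x : ℝ => 1 - x^2/2 + x^4/24 - cos x)
          (0 - 2*y^(2-1)/2 + 4*y^(4-1)/24 - (-sin y)) y :=
        ((((hasDerivAt_const y (1:ℝ)).sub ((hasDerivAt_pow 2 y).div_const 2)).add
          ((hasDerivAt_pow 4 y).div_const 24)).sub (Real.hasDerivAt_cos y))
      convert this using 1; norm_num; ring)
    (fun y hy => by nlinarith [sin_ge_cubic hy]) hx
  simp at this; linarith

private lemma sin_le_quint {x : ℝ} (hx : 0 ≤ x) : sin x ≤ x - x^3/6 + x^5/120 := by
  have := mono_aux (f := fun x : ℝ => x - x^3/6 + x^5/120 - sin x)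
    (f' := fun y : ℝ => 1 - y^2/2 + y^4/24 - cos y) (fun y => by
      have : HasDerivAt (fun x : ℝ => x - x^3/6 + x^5/120 - sin x)
          (1 - 3*y^(3-1)/6 + 5*y^(5-1)/120 - cos y) y :=
        ((((hasDerivAt_id y).sub ((hasDerivAt_pow 3 y).div_const 6)).add
          ((hasDerivAt_pow 5 y).div_const 120)).sub (Real.hasDerivAt_sin y))
      convert this using 1; norm_num; ring)
    (fun y hy => by nlinarith [cos_le_quart hy]) hx
  simp at this; linarith

private lemma cos_ge_six {x : ℝ} (hx : 0 ≤ x) : 1 - x^2/2 + x^4/24 - x^6/720 ≤ cos x := by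
  have := mono_aux (f := fun x : ℝ => cos x - (1 - x^2/2 + x^4/24 - x^6/720))
    (f' := fun y : ℝ => (y - y^3/6 + y^5/120) - sin y) (fun y => by
      have : HasDerivAt (fun x : ℝ => cos x - (1 - x^2/2 + x^4/24 - x^6/720))
          ((-sin y) - (0 - 2*y^(2-1)/2 + 4*y^(4-1)/24 - 6*y^(6-1)/720)) y :=
        (Real.hasDerivAt_cos y).sub ((((hasDerivAt_const y (1:ℝ)).sub
          ((hasDerivAt_pow 2 y).div_const 2)).add ((hasDerivAt_pow 4 y).div_const 24)).sub
          ((hasDerivAt_pow 6 y).div_const 720))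
      convert this using 1; norm_num; ring)
    (fun y hy => by nlinarith [sin_le_quint hy]) hx
  simp at this; linarith

private lemma sin_ge_sept {x : ℝ} (hx : 0 ≤ x) :
    x - x^3/6 + x^5/120 - x^7/5040 ≤ sin x := by
  have := mono_aux (f := fun x : ℝ => sin x - (x - x^3/6 + x^5/120 - x^7/5040))
    (f' := fun y : ℝ => cos y - (1 - y^2/2 + y^4/24 - y^6/720)) (fun y => by
      have : HasDerivAt (fun x : ℝ => sin x - (x - x^3/6 + x^5/120 - x^7/5040))
          (cos y - (1 - 3*y^(3-1)/6 + 5*y^(5-1)/120 - 7*y^(7-1)/5040)) y :=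
        (Real.hasDerivAt_sin y).sub ((((hasDerivAt_id y).sub
          ((hasDerivAt_pow 3 y).div_const 6)).add ((hasDerivAt_pow 5 y).div_const 120)).sub
          ((hasDerivAt_pow 7 y).div_const 5040))
      convert this using 1; norm_num; ring)
    (fun y hy => by nlinarith [cos_ge_six hy]) hx
  simp at this; linarith

private lemma cos_le_eight {x : ℝ} (hx : 0 ≤ x) :
    cos x ≤ 1 - x^2/2 + x^4/24 - x^6/720 + x^8/40320 := by
  have := mono_aux (f := fun x : ℝ => 1 - x^2/2 + x^4/24 - x^6/720 + x^8/40320 - cos x)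
    (f' := fun y : ℝ => sin y - (y - y^3/6 + y^5/120 - y^7/5040)) (fun y => by
      have : HasDerivAt (fun x : ℝ => 1 - x^2/2 + x^4/24 - x^6/720 + x^8/40320 - cos x)
          ((0 - 2*y^(2-1)/2 + 4*y^(4-1)/24 - 6*y^(6-1)/720 + 8*y^(8-1)/40320) - (-sin y)) y :=
        (((((hasDerivAt_const y (1:ℝ)).sub ((hasDerivAt_pow 2 y).div_const 2)).add
          ((hasDerivAt_pow 4 y).div_const 24)).sub ((hasDerivAt_pow 6 y).div_const 720)).add
          ((hasDerivAt_pow 8 y).div_const 40320)).sub (Real.hasDerivAt_cos y)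
      convert this using 1; norm_num; ring)
    (fun y hy => by nlinarith [sin_ge_sept hy]) hx
  simp at this; linarith

private lemma cos_two_pi_div_five : Real.cos (2*π/5) = (Real.sqrt 5 - 1)/4 := by
  have h : Real.cos (2*(π/5)) = 2 * Real.cos (π/5)^2 - 1 := Real.cos_two_mul _
  have h2 : (2*(π/5) : ℝ) = 2*π/5 := by ring
  rw [h2] at h
  rw [h, Real.cos_pi_div_five]
  have s5 : Real.sqrt 5 ^ 2 = 5 := Real.sq_sqrt (by norm_num)
  nlinarith [s5]

private lemma arccos_ge' {y r : ℝ} (h : y ≤ cos r) (hr0 : 0 ≤ r) (hrpi : r ≤ π) :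
    r ≤ arccos y := by
  have h1 : arcsin y ≤ arcsin (cos r) := Real.monotone_arcsin h
  have h2 : arccos (cos r) = r := Real.arccos_cos hr0 hrpi
  rw [Real.arccos] at *
  linarith

private lemma arccos_le' {y r : ℝ} (h : cos r ≤ y) (hr0 : 0 ≤ r) (hrpi : r ≤ π) :
    arccos y ≤ r := by
  have h1 : arcsin (cos r) ≤ arcsin y := Real.monotone_arcsin h
  have h2 : arccos (cos r) = r := Real.arccos_cos hr0 hrpi
  rw [Real.arccos] at *
  linarith

private lemma regPerim_four (x : ℝ) (h : Real.sin (x/4) ≠ -1) :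
    regPerim x 4 = 4 * Real.arccos ((1 - Real.sin (x/4)) / (1 + Real.sin (x/4))) := by
  unfold regPerim
  have e1 : (π - (2*π - x)/4)/2 = π/4 + x/8 := by ring
  rw [e1]
  congr 2
  have e2 : (2*π/4 : ℝ) = π/2 := by ring
  rw [e2, Real.cos_pi_div_two]
  have e3 : Real.cos (π/4 + x/8) ^ 2 = 1/2 - Real.sin (x/4)/2 := by
    rw [Real.cos_sq]
    have : (2*(π/4 + x/8) : ℝ) = π/2 + x/4 := by ring
    rw [this, Real.cos_add, Real.cos_pi_div_two, Real.sin_pi_div_two]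
    ring
  have e4 : Real.sin (π/4 + x/8) ^ 2 = 1/2 + Real.sin (x/4)/2 := by
    have := Real.sin_sq_add_cos_sq (π/4 + x/8)
    nlinarith [e3]
  rw [e3, e4]
  have hne : 1/2 + Real.sin (x/4)/2 ≠ 0 := by
    intro hc; apply h; linarith [hc]
  field_simp
  ring

private lemma ell_lb {x a r : ℝ} (ha0 : 0 ≤ a) (hax : a ≤ x) (hx : x ≤ 1.048)
    (hr0 : 0 ≤ r) (hr1 : r ≤ 1)
    (h : (1 - (a/4 - a^3/384)) / (1 + (a/4 - a^3/384)) ≤ 1 - r^2/2 + r^4/24 - r^6/720) :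
    4 * r ≤ regPerim x 4 := by
  have hx0 : (0:ℝ) ≤ x := le_trans ha0 hax
  set s := Real.sin (x/4) with hs
  have hsge : x/4 - (x/4)^3/6 ≤ s := sin_ge_cubic (by linarith)
  have hσs : a/4 - a^3/384 ≤ s := by
    nlinarith [mul_nonneg (sub_nonneg.2 hax) (show (0:ℝ) ≤ 96 - (x^2 + a*x + a^2) by nlinarith)]
  have hσ0 : (0:ℝ) ≤ a/4 - a^3/384 := by
    nlinarith [mul_nonneg ha0 (show (0:ℝ) ≤ 96 - a^2 by nlinarith)]
  have hs1 : s ≤ 1 := Real.sin_le_one _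
  have hs0 : 0 ≤ s := le_trans hσ0 hσs
  have hy : (1 - s)/(1 + s) ≤ (1 - (a/4 - a^3/384))/(1 + (a/4 - a^3/384)) := by
    rw [div_le_div_iff₀ (by linarith) (by linarith)]
    nlinarith
  have hcos : (1 - s)/(1 + s) ≤ Real.cos r := by
    calc (1 - s)/(1 + s) ≤ 1 - r^2/2 + r^4/24 - r^6/720 := le_trans hy h
    _ ≤ Real.cos r := cos_ge_six hr0
  rw [regPerim_four x (by intro hc; rw [← hs] at hc; linarith)]
  have : r ≤ Real.arccos ((1 - s)/(1 + s)) :=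
    arccos_ge' hcos hr0 (le_trans hr1 (by linarith [Real.pi_gt_three]))
  linarith


private lemma sqrt5_lb : 2.2360679 ≤ Real.sqrt 5 := by
  nlinarith [Real.sq_sqrt (show (0:ℝ) ≤ 5 by norm_num), Real.sqrt_nonneg 5]
private lemma sqrt5_ub : Real.sqrt 5 ≤ 2.236068 := by
  nlinarith [Real.sq_sqrt (show (0:ℝ) ≤ 5 by norm_num), Real.sqrt_nonneg 5]
private lemma sqrt3_lb : 1.7320508 ≤ Real.sqrt 3 := by
  nlinarith [Real.sq_sqrt (show (0:ℝ) ≤ 3 by norm_num), Real.sqrt_nonneg 3]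
private lemma sqrt15_lb : 3.872983 ≤ Real.sqrt 3 * Real.sqrt 5 := by
  nlinarith [Real.sq_sqrt (show (0:ℝ) ≤ 3 by norm_num),
    Real.sq_sqrt (show (0:ℝ) ≤ 5 by norm_num), Real.sqrt_nonneg 3, Real.sqrt_nonneg 5,
    mul_nonneg (Real.sqrt_nonneg 3) (Real.sqrt_nonneg 5)]

private lemma arccos_s53_ge : 0.72941 ≤ Real.arccos (Real.sqrt 5/3) := by
  apply arccos_ge' _ (by norm_num) (by linarith [Real.pi_gt_three])
  have h := cos_ge_six (show (0:ℝ) ≤ 0.72941 by norm_num)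
  have h5 := sqrt5_ub
  nlinarith

private lemma arccos_s53_le : Real.arccos (Real.sqrt 5/3) ≤ 0.72974 := by
  apply arccos_le' _ (by norm_num) (by linarith [Real.pi_gt_three])
  have h := cos_le_eight (show (0:ℝ) ≤ 0.72974 by norm_num)
  have h5 := sqrt5_lb
  nlinarith

private lemma sin_2pi5_ub : Real.sin (2*π/5) ≤ 0.9510566 := by
  have h0 : 0 ≤ Real.sin (2*π/5) := by
    apply Real.sin_nonneg_of_nonneg_of_le_pi
    · positivity
    · nlinarith [Real.pi_pos]
  have hsq : Real.sin (2*π/5)^2 = 1 - Real.cos (2*π/5)^2 := by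
    have := Real.sin_sq_add_cos_sq (2*π/5); linarith
  rw [cos_two_pi_div_five] at hsq
  have s5 : Real.sqrt 5 ^ 2 = 5 := Real.sq_sqrt (by norm_num)
  nlinarith [sqrt5_ub, sqrt5_lb]


private lemma sqrt3_ub : Real.sqrt 3 ≤ 1.7320509 := by
  nlinarith [Real.sq_sqrt (show (0:ℝ) ≤ 3 by norm_num), Real.sqrt_nonneg 3]
private lemma sqrt15_ub : Real.sqrt 3 * Real.sqrt 5 ≤ 3.8729834 := by
  nlinarith [Real.sq_sqrt (show (0:ℝ) ≤ 3 by norm_num),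
    Real.sq_sqrt (show (0:ℝ) ≤ 5 by norm_num), Real.sqrt_nonneg 3, Real.sqrt_nonneg 5,
    mul_nonneg (Real.sqrt_nonneg 3) (Real.sqrt_nonneg 5)]

private lemma sin_2pi5_lb : 0.95105 ≤ Real.sin (2*π/5) := by
  have h0 : 0 ≤ Real.sin (2*π/5) := by
    apply Real.sin_nonneg_of_nonneg_of_le_pi
    · positivity
    · nlinarith [Real.pi_pos]
  have hsq : Real.sin (2*π/5)^2 = 1 - Real.cos (2*π/5)^2 := by
    have := Real.sin_sq_add_cos_sq (2*π/5); linarith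
  rw [cos_two_pi_div_five] at hsq
  have s5 : Real.sqrt 5 ^ 2 = 5 := Real.sq_sqrt (by norm_num)
  nlinarith [sqrt5_ub, sqrt5_lb]

private lemma p5_ub : p5 ≤ 3.6487 := by
  unfold p5
  have harg : (4 * Real.cos (2*π/5) + 1)/3 = Real.sqrt 5/3 := by
    rw [cos_two_pi_div_five]; ring
  rw [show (2 * π / 5 : ℝ) = 2*π/5 by ring, harg]
  linarith [arccos_s53_le]

private lemma hasDeriv_B :
    HasDerivAt (fun x : ℝ => regPerim x 5) (Real.sqrt 3 * (3 + Real.sqrt 5) / 6) (π/3) := by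
  have hval : (π - (2*π - π/3)/5)/2 = π/3 := by ring
  have s3 : Real.sqrt 3 ^ 2 = 3 := Real.sq_sqrt (by norm_num)
  have s5 : Real.sqrt 5 ^ 2 = 5 := Real.sq_sqrt (by norm_num)
  have hφ : HasDerivAt (fun x : ℝ => (π - (2*π - x)/5)/2) (1/10) (π/3) := by
    have h1 := ((((hasDerivAt_id (π/3)).const_sub (2*π)).div_const 5).const_sub π).div_const 2
    rw [show (1/10:ℝ) = -(-1/5)/2 by norm_num]
    exact h1
  have hcosφ := hφ.cos
  have hsinφ := hφ.sin
  rw [hval] at hcosφ hsinφ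
  rw [Real.sin_pi_div_three] at hcosφ
  rw [Real.cos_pi_div_three] at hsinφ
  have hcos2 := hcosφ.pow 2
  have hsin2 := hsinφ.pow 2
  have hN := hcos2.const_add (Real.cos (2*π/5))
  have hDne : Real.sin ((π - (2*π - π/3)/5)/2) ^ 2 ≠ 0 := by
    rw [hval, Real.sin_pi_div_three]
    positivity
  have hne : ((fun x : ℝ => Real.sin ((π - (2*π - x)/5)/2) ^ 2) (π/3)) ≠ 0 := by
    simp only []
    rw [hval, Real.sin_pi_div_three]; positivity
  have hq := hN.div hsin2 hne
  have h34 : (Real.sqrt 3/2)^2 = (3:ℝ)/4 := by rw [div_pow, s3]; norm_num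
  have hqv : (Real.cos (2*π/5) + Real.cos ((π - (2*π - π/3)/5)/2)^2) /
      (Real.sin ((π - (2*π - π/3)/5)/2)^2) = Real.sqrt 5/3 := by
    rw [hval, Real.cos_pi_div_three, Real.sin_pi_div_three, cos_two_pi_div_five, h34]
    ring
  have hne1 : (Real.cos (2*π/5) + Real.cos ((π - (2*π - π/3)/5)/2)^2) /
      (Real.sin ((π - (2*π - π/3)/5)/2)^2) ≠ -1 := by
    rw [hqv]; intro hc; have h0 := Real.sqrt_nonneg 5; linarith
  have hne2 : (Real.cos (2*π/5) + Real.cos ((π - (2*π - π/3)/5)/2)^2) /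
      (Real.sin ((π - (2*π - π/3)/5)/2)^2) ≠ 1 := by
    rw [hqv]
    intro hc
    have : Real.sqrt 5 = 3 := by field_simp at hc; linarith
    rw [this] at s5; norm_num at s5
  have hac := (Real.hasDerivAt_arccos hne1 hne2).comp (π/3) hq
  simp only [Function.comp_def] at hac
  have hfin := hac.const_mul (5:ℝ)
  have hunfold : (fun x : ℝ => regPerim x 5) = (fun x : ℝ =>
      5 * Real.arccos ((Real.cos (2*π/5) + Real.cos ((π - (2*π - x)/5)/2)^2) /
        (Real.sin ((π - (2*π - x)/5)/2)^2))) := by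
    funext x
    unfold regPerim
    norm_num
  rw [hunfold]
  refine hfin.congr_deriv ?_
  symm
  simp only [Pi.pow_apply, Pi.add_apply, Pi.div_apply, id_eq]
  rw [hqv]
  have h19 : (1 - (Real.sqrt 5/3)^2 : ℝ) = 4/9 := by rw [div_pow, s5]; norm_num
  rw [h19, show (4/9:ℝ) = (2/3)^2 by norm_num, Real.sqrt_sq (by norm_num : (0:ℝ) ≤ 2/3)]
  rw [hval, Real.cos_pi_div_three, Real.sin_pi_div_three, cos_two_pi_div_five, h34]
  norm_num
  ring

private lemma hasDeriv_N :
    HasDerivAt (fun n : ℝ => regPerim (π/3) n)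
      (Real.arccos (Real.sqrt 5/3) -
        π * (4*Real.sin (2*π/5)/5 - Real.sqrt 3/6 - Real.sqrt 3*Real.sqrt 5/18)) 5 := by
  have hval : (π - (2*π - π/3)/5)/2 = π/3 := by ring
  have s3 : Real.sqrt 3 ^ 2 = 3 := Real.sq_sqrt (by norm_num)
  have s5 : Real.sqrt 5 ^ 2 = 5 := Real.sq_sqrt (by norm_num)
  have h34 : (Real.sqrt 3/2)^2 = (3:ℝ)/4 := by rw [div_pow, s3]; norm_num
  have h2pin : HasDerivAt (fun n : ℝ => 2*π/n) ((0*5 - 2*π*1)/5^2) 5 :=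
    (hasDerivAt_const 5 (2*π)).div (hasDerivAt_id 5) (by norm_num)
  have hcos1 := h2pin.cos
  have hψ : HasDerivAt (fun n : ℝ => (π - (2*π - π/3)/n)/2)
      (-((0*5 - (2*π - π/3)*1)/5^2)/2) 5 :=
    (((hasDerivAt_const 5 (2*π - π/3)).div (hasDerivAt_id 5) (by norm_num)).const_sub π).div_const 2
  have hcosψ := hψ.cos
  have hsinψ := hψ.sin
  rw [show ((π - (2*π - π/3)/5)/2 : ℝ) = π/3 by ring] at hcosψ hsinψ
  rw [Real.sin_pi_div_three] at hcosψ
  rw [Real.cos_pi_div_three] at hsinψ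
  have hcos2 := hcosψ.pow 2
  have hsin2 := hsinψ.pow 2
  have hN := hcos1.add hcos2
  have hne : ((fun n : ℝ => Real.sin ((π - (2*π - π/3)/n)/2) ^ 2) 5) ≠ 0 := by
    simp only []
    rw [hval, Real.sin_pi_div_three]; positivity
  have hq := hN.div hsin2 hne
  have hqv : (Real.cos (2*π/5) + Real.cos ((π - (2*π - π/3)/5)/2)^2) /
      (Real.sin ((π - (2*π - π/3)/5)/2)^2) = Real.sqrt 5/3 := by
    rw [hval, Real.cos_pi_div_three, Real.sin_pi_div_three, cos_two_pi_div_five, h34]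
    ring
  have hne1 : (Real.cos (2*π/5) + Real.cos ((π - (2*π - π/3)/5)/2)^2) /
      (Real.sin ((π - (2*π - π/3)/5)/2)^2) ≠ -1 := by
    rw [hqv]; intro hc; have h0 := Real.sqrt_nonneg 5; linarith
  have hne2 : (Real.cos (2*π/5) + Real.cos ((π - (2*π - π/3)/5)/2)^2) /
      (Real.sin ((π - (2*π - π/3)/5)/2)^2) ≠ 1 := by
    rw [hqv]
    intro hc
    have : Real.sqrt 5 = 3 := by field_simp at hc; linarith
    rw [this] at s5; norm_num at s5
  have hac := (Real.hasDerivAt_arccos hne1 hne2).comp (5:ℝ) hq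
  simp only [Function.comp_def] at hac
  have hmul := (hasDerivAt_id (5:ℝ)).mul hac
  have hunfold : (fun n : ℝ => regPerim (π/3) n) = (fun n : ℝ =>
      n * Real.arccos ((Real.cos (2*π/n) + Real.cos ((π - (2*π - π/3)/n)/2)^2) /
        (Real.sin ((π - (2*π - π/3)/n)/2)^2))) := by
    funext n
    unfold regPerim
    norm_num
  rw [hunfold]
  refine hmul.congr_deriv ?_
  symm
  simp only [Pi.pow_apply, Pi.add_apply, Pi.div_apply, id_eq]
  rw [hqv]
  have h19 : (1 - (Real.sqrt 5/3)^2 : ℝ) = 4/9 := by rw [div_pow, s5]; norm_num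
  rw [h19, show (4/9:ℝ) = (2/3)^2 by norm_num, Real.sqrt_sq (by norm_num : (0:ℝ) ≤ 2/3)]
  rw [hval, Real.cos_pi_div_three, Real.sin_pi_div_three, cos_two_pi_div_five, h34]
  norm_num
  ring

private lemma B'_eq : B' = -(Real.sqrt 3 * (3 + Real.sqrt 5)/6) := by
  unfold B'
  rw [hasDeriv_B.deriv]


private lemma fp_lb : 1.5115 ≤ Real.sqrt 3 * (3 + Real.sqrt 5)/6 := by
  nlinarith [sqrt3_lb, sqrt5_lb, sqrt15_lb]


private lemma p5'_lb : -0.0781 ≤ p5' := by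
  unfold p5'
  rw [hasDeriv_N.deriv]
  have hE0 : 0 ≤ 4*Real.sin (2*π/5)/5 - Real.sqrt 3/6 - Real.sqrt 3*Real.sqrt 5/18 := by
    linarith [sin_2pi5_lb, sqrt3_ub, sqrt15_ub]
  have hEub : 4*Real.sin (2*π/5)/5 - Real.sqrt 3/6 - Real.sqrt 3*Real.sqrt 5/18 ≤ 0.25700443 := by
    linarith [sin_2pi5_ub, sqrt3_lb, sqrt15_lb]
  nlinarith [arccos_s53_ge, mul_nonneg (sub_nonneg.2 Real.pi_lt_d6.le) hE0,
    Real.pi_gt_d6, Real.pi_lt_d6]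


set_option maxHeartbeats 4000000 in
theorem case_n4_T_nonneg :
    (∀ ρ ∈ Set.Icc (0.1 : ℝ) 0.85, ∀ t ∈ Set.Icc (0 : ℝ) 0.168,
        Ifun (circPerim0 (ρ * π / 3)) 4 t ρ > 0) ∧
    (∀ ρ ∈ Set.Icc (0.85 : ℝ) 1, ∀ t ∈ Set.Icc (0 : ℝ) 0.168,
        Ifun (regPerim (ρ * π / 3 - t) 4) 4 t ρ > 0) := by
  have hπl := Real.pi_gt_d6
  have hπu := Real.pi_lt_d6
  constructor
  · intro ρ hρ t ht
    obtain ⟨hρ1, hρ2⟩ := hρ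
    obtain ⟨ht1, ht2⟩ := ht
    have hπ2l : (9.8696002:ℝ) ≤ π^2 := by nlinarith
    have hπ2u : π^2 ≤ (9.8696066:ℝ) := by nlinarith [Real.pi_pos]
    have hsqrt : (3.6487*ρ + 0.0781 : ℝ) < Real.sqrt (4*π*(ρ*π/3) - (ρ*π/3)^2) := by
      rw [Real.lt_sqrt (by positivity)]
      have hcc : 0 ≤ (ρ - 0.1) * (0.85 - ρ) :=
        mul_nonneg (by linarith) (by linarith)
      nlinarith [mul_nonneg (sub_nonneg.2 hπ2l) (show (0:ℝ) ≤ ρ by linarith),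
        mul_nonneg (sub_nonneg.2 hπ2u) (sq_nonneg ρ), hcc]
    have hρp5 : ρ * p5 ≤ ρ * 3.6487 :=
      mul_le_mul_of_nonneg_left p5_ub (by linarith)
    have hBt : 0 ≤ -(t * B') := by
      rw [B'_eq]
      have : -(t * -(Real.sqrt 3 * (3 + Real.sqrt 5)/6)) = t * (Real.sqrt 3 * (3 + Real.sqrt 5)/6) := by ring
      rw [this]
      exact mul_nonneg ht1 (by positivity)
    unfold Ifun circPerim0
    nlinarith [hsqrt, hρp5, hBt, p5'_lb]
  · intro ρ hρ t ht
    obtain ⟨hρ1, hρ2⟩ := hρ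
    obtain ⟨ht1, ht2⟩ := ht
    set x : ℝ := ρ * π / 3 - t with hxdef
    have hρπ : ρ * π = 3*(x + t) := by rw [hxdef]; ring
    have hx_lo : (0.7221:ℝ) ≤ x := by
      nlinarith [mul_nonneg (sub_nonneg.2 hρ1) (show (0:ℝ) ≤ π - 3.141592 by linarith)]
    have hxt_ub : x + t ≤ 1.047198 := by
      nlinarith [mul_nonneg (sub_nonneg.2 hρ2) (show (0:ℝ) ≤ π by linarith [Real.pi_pos])]
    have hx_ub : x ≤ 1.047198 := by linarith
    have hρp5 : ρ * p5 ≤ 3.48427*(x + t) := by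
      have h1 : ρ * p5 ≤ ρ * 3.6487 :=
        mul_le_mul_of_nonneg_left p5_ub (by linarith)
      nlinarith [mul_nonneg (show (0:ℝ) ≤ ρ by linarith)
        (show (0:ℝ) ≤ 3.48427 * π - 10.9461 by nlinarith)]
    have hBt : 1.5115 * t ≤ -(t * B') := by
      rw [B'_eq]
      have he : -(t * -(Real.sqrt 3 * (3 + Real.sqrt 5)/6)) = t * (Real.sqrt 3 * (3 + Real.sqrt 5)/6) := by ring
      rw [he]
      calc 1.5115 * t = t * 1.5115 := by ring
      _ ≤ t * (Real.sqrt 3 * (3 + Real.sqrt 5)/6) := mul_le_mul_of_nonneg_left fp_lb ht1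
    unfold Ifun
    rcases le_or_gt x 0.7921 with hxb0 | hxa1
    · have hell := ell_lb (x := x) (a := 0.7221) (r := 0.80157) (by norm_num) (by linarith [hx_lo]) (by linarith) (by norm_num) (by norm_num) (by norm_num)
      linarith [hell, hBt, p5'_lb, hρp5, ht2, hxt_ub, hxb0]
    rcases le_or_gt x 0.8408 with hxb1 | hxa2
    · have hell := ell_lb (x := x) (a := 0.7921) (r := 0.83493) (by norm_num) (by linarith [hxa1.le]) (by linarith) (by norm_num) (by norm_num) (by norm_num)
      linarith [hell, hBt, p5'_lb, hρp5, ht2, hxt_ub, hxb1]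
    rcases le_or_gt x 0.8661 with hxb2 | hxa3
    · have hell := ell_lb (x := x) (a := 0.8408) (r := 0.85695) (by norm_num) (by linarith [hxa2.le]) (by linarith) (by norm_num) (by norm_num) (by norm_num)
      linarith [hell, hBt, p5'_lb, hρp5, ht2, hxt_ub, hxb2]
    rcases le_or_gt x 0.8788 with hxb3 | hxa4
    · have hell := ell_lb (x := x) (a := 0.8661) (r := 0.86803) (by norm_num) (by linarith [hxa3.le]) (by linarith) (by norm_num) (by norm_num) (by norm_num)
      linarith [hell, hBt, p5'_lb, hρp5, ht2, hxt_ub, hxb3]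
    rcases le_or_gt x 0.8851 with hxb4 | hxa5
    · have hell := ell_lb (x := x) (a := 0.8788) (r := 0.87351) (by norm_num) (by linarith [hxa4.le]) (by linarith) (by norm_num) (by norm_num) (by norm_num)
      linarith [hell, hBt, p5'_lb, hρp5, ht2, hxt_ub, hxb4]
    rcases le_or_gt x 0.8915 with hxb5 | hxa6
    · have hell := ell_lb (x := x) (a := 0.8851) (r := 0.87621) (by norm_num) (by linarith [hxa5.le]) (by linarith) (by norm_num) (by norm_num) (by norm_num)
      linarith [hell, hBt, p5'_lb, hρp5, ht2, hxt_ub, hxb5]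
    rcases le_or_gt x 0.8983 with hxb6 | hxa7
    · have hell := ell_lb (x := x) (a := 0.8915) (r := 0.87893) (by norm_num) (by linarith [hxa6.le]) (by linarith) (by norm_num) (by norm_num) (by norm_num)
      linarith [hell, hBt, p5'_lb, hρp5, ht2, hxt_ub, hxb6]
    rcases le_or_gt x 0.9054 with hxb7 | hxa8
    · have hell := ell_lb (x := x) (a := 0.8983) (r := 0.88181) (by norm_num) (by linarith [hxa7.le]) (by linarith) (by norm_num) (by norm_num) (by norm_num)
      linarith [hell, hBt, p5'_lb, hρp5, ht2, hxt_ub, hxb7]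
    rcases le_or_gt x 0.9129 with hxb8 | hxa9
    · have hell := ell_lb (x := x) (a := 0.9054) (r := 0.8848) (by norm_num) (by linarith [hxa8.le]) (by linarith) (by norm_num) (by norm_num) (by norm_num)
      linarith [hell, hBt, p5'_lb, hρp5, ht2, hxt_ub, hxb8]
    rcases le_or_gt x 0.9207 with hxb9 | hxa10
    · have hell := ell_lb (x := x) (a := 0.9129) (r := 0.88794) (by norm_num) (by linarith [hxa9.le]) (by linarith) (by norm_num) (by norm_num) (by norm_num)
      linarith [hell, hBt, p5'_lb, hρp5, ht2, hxt_ub, hxb9]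
    rcases le_or_gt x 0.9289 with hxb10 | hxa11
    · have hell := ell_lb (x := x) (a := 0.9207) (r := 0.89119) (by norm_num) (by linarith [hxa10.le]) (by linarith) (by norm_num) (by norm_num) (by norm_num)
      linarith [hell, hBt, p5'_lb, hρp5, ht2, hxt_ub, hxb10]
    rcases le_or_gt x 0.9374 with hxb11 | hxa12
    · have hell := ell_lb (x := x) (a := 0.9289) (r := 0.89458) (by norm_num) (by linarith [hxa11.le]) (by linarith) (by norm_num) (by norm_num) (by norm_num)
      linarith [hell, hBt, p5'_lb, hρp5, ht2, hxt_ub, hxb11]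
    rcases le_or_gt x 0.9462 with hxb12 | hxa13
    · have hell := ell_lb (x := x) (a := 0.9374) (r := 0.89807) (by norm_num) (by linarith [hxa12.le]) (by linarith) (by norm_num) (by norm_num) (by norm_num)
      linarith [hell, hBt, p5'_lb, hρp5, ht2, hxt_ub, hxb12]
    rcases le_or_gt x 0.9553 with hxb13 | hxa14
    · have hell := ell_lb (x := x) (a := 0.9462) (r := 0.90166) (by norm_num) (by linarith [hxa13.le]) (by linarith) (by norm_num) (by norm_num) (by norm_num)
      linarith [hell, hBt, p5'_lb, hρp5, ht2, hxt_ub, hxb13]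
    rcases le_or_gt x 0.9647 with hxb14 | hxa15
    · have hell := ell_lb (x := x) (a := 0.9553) (r := 0.90535) (by norm_num) (by linarith [hxa14.le]) (by linarith) (by norm_num) (by norm_num) (by norm_num)
      linarith [hell, hBt, p5'_lb, hρp5, ht2, hxt_ub, hxb14]
    rcases le_or_gt x 0.9744 with hxb15 | hxa16
    · have hell := ell_lb (x := x) (a := 0.9647) (r := 0.90913) (by norm_num) (by linarith [hxa15.le]) (by linarith) (by norm_num) (by norm_num) (by norm_num)
      linarith [hell, hBt, p5'_lb, hρp5, ht2, hxt_ub, hxb15]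
    rcases le_or_gt x 0.9843 with hxb16 | hxa17
    · have hell := ell_lb (x := x) (a := 0.9744) (r := 0.913) (by norm_num) (by linarith [hxa16.le]) (by linarith) (by norm_num) (by norm_num) (by norm_num)
      linarith [hell, hBt, p5'_lb, hρp5, ht2, hxt_ub, hxb16]
    rcases le_or_gt x 0.9944 with hxb17 | hxa18
    · have hell := ell_lb (x := x) (a := 0.9843) (r := 0.91693) (by norm_num) (by linarith [hxa17.le]) (by linarith) (by norm_num) (by norm_num) (by norm_num)
      linarith [hell, hBt, p5'_lb, hρp5, ht2, hxt_ub, hxb17]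
    rcases le_or_gt x 1.0047 with hxb18 | hxa19
    · have hell := ell_lb (x := x) (a := 0.9944) (r := 0.9209) (by norm_num) (by linarith [hxa18.le]) (by linarith) (by norm_num) (by norm_num) (by norm_num)
      linarith [hell, hBt, p5'_lb, hρp5, ht2, hxt_ub, hxb18]
    rcases le_or_gt x 1.0152 with hxb19 | hxa20
    · have hell := ell_lb (x := x) (a := 1.0047) (r := 0.92492) (by norm_num) (by linarith [hxa19.le]) (by linarith) (by norm_num) (by norm_num) (by norm_num)
      linarith [hell, hBt, p5'_lb, hρp5, ht2, hxt_ub, hxb19]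
    rcases le_or_gt x 1.0258 with hxb20 | hxa21
    · have hell := ell_lb (x := x) (a := 1.0152) (r := 0.92899) (by norm_num) (by linarith [hxa20.le]) (by linarith) (by norm_num) (by norm_num) (by norm_num)
      linarith [hell, hBt, p5'_lb, hρp5, ht2, hxt_ub, hxb20]
    rcases le_or_gt x 1.0365 with hxb21 | hxa22
    · have hell := ell_lb (x := x) (a := 1.0258) (r := 0.93307) (by norm_num) (by linarith [hxa21.le]) (by linarith) (by norm_num) (by norm_num) (by norm_num)
      linarith [hell, hBt, p5'_lb, hρp5, ht2, hxt_ub, hxb21]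
    have hell := ell_lb (x := x) (a := 1.0365) (r := 0.93715) (by norm_num) (by linarith [hxa22.le]) (by linarith) (by norm_num) (by norm_num) (by norm_num)
    linarith [hell, hBt, p5'_lb, hρp5, ht2, hxt_ub, hx_ub]
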